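/- Let R be the polynomial ring over ℂ in countably many variables u_{1,N}, u_{2,N}, v_{1,N} (N ∈ ℕ), with the ℂ-derivation ∂ determined by ∂(u_{i,N}) = u_{i,N+1} and ∂(v_{1,N}) = v_{1,N+1}, and identify ℂ[u_1, u_2, v_1] with the subring of R generated by u_{1,0}, u_{2,0}, v_{1,0}. Then the smallest ∂-stable ℂ-subalgebra of R containing the algebra Λ^{2|1} of supersymmetric polynomials equals the smallest ∂-stable ℂ-subalgebra of R containing the power sums s_p = u_{1,0}^p + u_{2,0}^p − (−1)^p v_{1,0}^p for all p ≥ 1. -/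

import Mathlib

open MvPolynomial

/-- The algebra `R = ℂ[u_{1,N}, u_{2,N}, v_{1,N} : N ∈ ℕ]` of differential
polynomials: variable `(i, N)` is `∂^N u_{i+1}` for `i = 0, 1` and `∂^N v₁`
for `i = 2`. -/
abbrev DiffPoly : Type := MvPolynomial (Fin 3 × ℕ) ℂ

/-- The embedding `ℂ[u₁, u₂, v₁] ↪ R` sending the variables to the
index-`0` variables `u_{1,0}, u_{2,0}, v_{1,0}`. -/
noncomputable def emb : MvPolynomial (Fin 3) ℂ →ₐ[ℂ] DiffPoly :=
  rename (fun i => (i, 0))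

/-- A polynomial `f ∈ ℂ[u₁, u₂, v₁]` (with `u₁ = X 0`, `u₂ = X 1`, `v₁ = X 2`)
is supersymmetric if it is invariant under interchanging `u₁, u₂` and the
substitution `u₂ = t`, `v₁ = −t` yields a polynomial independent of `t`. -/
def IsSupersymmetric (f : MvPolynomial (Fin 3) ℂ) : Prop :=
  rename (Equiv.swap (0 : Fin 3) 1) f = f ∧
  ∀ t t' : ℂ, aeval ![X 0, C t, -(C t)] f = aeval ![X 0, C t', -(C t')] f

/-- The power sums `s_p = u₁^p + u₂^p − (−1)^p v₁^p`. -/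
noncomputable def powerSum (p : ℕ) : MvPolynomial (Fin 3) ℂ :=
  X 0 ^ p + X 1 ^ p - (-1 : MvPolynomial (Fin 3) ℂ) ^ p * X 2 ^ p

/-! ### Auxiliary setup -/

abbrev P3 := MvPolynomial (Fin 3) ℂ
abbrev P2 := MvPolynomial (Fin 2) ℂ

noncomputable def Qp : P3 := (X 0 + X 2) * (X 1 + X 2)

noncomputable def Talg : Subalgebra ℂ P3 := Algebra.adjoin ℂ (powerSum '' {p | 1 ≤ p})

lemma ps1 : powerSum 1 = X 0 + X 1 + X 2 := by simp only [powerSum]; ring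
lemma ps2 : powerSum 2 = X 0 ^ 2 + X 1 ^ 2 - X 2 ^ 2 := by simp only [powerSum]; ring

lemma hs_mem (p : ℕ) (hp : 1 ≤ p) : powerSum p ∈ Talg :=
  Algebra.subset_adjoin ⟨p, hp, rfl⟩

lemma hQ2 : powerSum 1 ^ 2 - powerSum 2 = (2:ℂ) • Qp := by
  rw [two_smul, ps1, ps2, Qp]; ring

lemma hQT : Qp ∈ Talg := by
  have h : Qp = (2⁻¹:ℂ) • (powerSum 1 ^ 2 - powerSum 2) := by
    rw [hQ2, smul_smul]; norm_num
  rw [h]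
  exact Subalgebra.smul_mem _ (sub_mem (pow_mem (hs_mem 1 le_rfl) 2) (hs_mem 2 one_le_two)) _

/-! ### The Newton-type recurrence for `E_k = Q v^{k-2}` -/

lemma Jid (c : ℕ) :
    (-1 : P3) ^ c * (powerSum (c+1) * Qp - powerSum (c+1) * powerSum 1 * X 2
      + powerSum (c+2) * X 2 - powerSum (c+2) * powerSum 1 + powerSum (c+3))
    = Qp * X 2 ^ (c+1) := by
  rcases Nat.even_or_odd c with hc | hc
  · have e1 : (-1 : P3) ^ c = 1 := hc.neg_one_pow
    have e2 : (-1 : P3) ^ (c+1) = -1 := (hc.add_one).neg_one_pow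
    have e3 : (-1 : P3) ^ (c+2) = 1 := by rw [pow_add, e1]; norm_num
    have e4 : (-1 : P3) ^ (c+3) = -1 := by rw [pow_add, e1]; norm_num
    simp only [powerSum, ps1, Qp, e1, e2, e3, e4]
    ring
  · have e1 : (-1 : P3) ^ c = -1 := hc.neg_one_pow
    have e2 : (-1 : P3) ^ (c+1) = 1 := by rw [pow_add, e1]; norm_num
    have e3 : (-1 : P3) ^ (c+2) = -1 := by rw [pow_add, e1]; norm_num
    have e4 : (-1 : P3) ^ (c+3) = 1 := by rw [pow_add, e1]; norm_num
    simp only [powerSum, ps1, Qp, e1, e2, e3, e4]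
    ring

lemma IDid (c : ℕ) :
    ((c : P3) + 2) * (Qp * X 2 ^ c) =
      (∑ p ∈ Finset.range c, (-1 : P3) ^ p * (powerSum (p+1) * (Qp * X 2 ^ (c-1-p))))
      + (-1 : P3) ^ c * (powerSum (c+1) * powerSum 1)
      + (-1 : P3) ^ (c+1) * powerSum (c+2) := by
  induction c with
  | zero =>
      simp only [Finset.range_zero, Finset.sum_empty, pow_zero, pow_one, Nat.cast_zero, zero_add]
      rw [ps1, ps2, Qp]; ring
  | succ c IH =>
      have hsum : (∑ p ∈ Finset.range (c+1), (-1 : P3) ^ p * (powerSum (p+1) * (Qp * X 2 ^ (c+1-1-p))))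
          = X 2 * (∑ p ∈ Finset.range c, (-1 : P3) ^ p * (powerSum (p+1) * (Qp * X 2 ^ (c-1-p))))
            + (-1 : P3) ^ c * (powerSum (c+1) * Qp) := by
        rw [Finset.sum_range_succ, Finset.mul_sum]
        refine congrArg₂ (· + ·) ?_ ?_
        · refine Finset.sum_congr rfl fun p hp => ?_
          have hlt := Finset.mem_range.mp hp
          have h : c + 1 - 1 - p = (c - 1 - p) + 1 := by omega
          rw [h, pow_succ]; ring
        · have h : c + 1 - 1 - c = 0 := by omega
          rw [h, pow_zero]; ring
      rw [hsum]
      have e2 : (-1 : P3) ^ (c+1+1) = (-1:P3)^c * 1 := by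
        rw [pow_succ, pow_succ]; ring
      have e1 : (-1 : P3) ^ (c+1) = (-1:P3)^c * (-1) := by rw [pow_succ]
      push_cast
      rw [e1, e2]
      have e3 : powerSum (c+1+2) = powerSum (c+3) := by norm_num
      have e4 : powerSum (c+1+1) = powerSum (c+2) := by norm_num
      rw [e3, e4]
      linear_combination (X 2 : P3) * IH + (-1) * Jid c

lemma EQmem : ∀ c : ℕ, Qp * X 2 ^ c ∈ Talg := by
  intro c
  induction c using Nat.strong_induction_on with
  | _ c IH =>
    have hne : ((c : ℂ) + 2) ≠ 0 := by
      have : ((c : ℂ) + 2) = ((c + 2 : ℕ) : ℂ) := by push_cast; ring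
      rw [this]
      exact Nat.cast_ne_zero.mpr (by omega)
    have hsc : ((c : ℂ) + 2) • (Qp * X 2 ^ c) = ((c : P3) + 2) * (Qp * X 2 ^ c) := by
      simp only [smul_eq_C_mul, map_add, map_natCast, map_ofNat]
    have hrep : Qp * X 2 ^ c = ((c : ℂ) + 2)⁻¹ •
        ((∑ p ∈ Finset.range c, (-1 : P3) ^ p * (powerSum (p+1) * (Qp * X 2 ^ (c-1-p))))
        + (-1 : P3) ^ c * (powerSum (c+1) * powerSum 1)
        + (-1 : P3) ^ (c+1) * powerSum (c+2)) := by
      rw [← IDid c, ← hsc, inv_smul_smul₀ hne]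
    rw [hrep]
    refine Subalgebra.smul_mem _ ?_ _
    have hneg : (-1 : P3) ∈ Talg := neg_mem (one_mem _)
    refine add_mem (add_mem ?_ ?_) ?_
    · refine sum_mem fun p hp => ?_
      have hlt := Finset.mem_range.mp hp
      exact mul_mem (pow_mem hneg p)
        (mul_mem (hs_mem (p+1) (by omega)) (IH (c-1-p) (by omega)))
    · exact mul_mem (pow_mem hneg c) (mul_mem (hs_mem (c+1) (by omega)) (hs_mem 1 le_rfl))
    · exact mul_mem (pow_mem hneg (c+1)) (hs_mem (c+2) (by omega))

/-! ### The subalgebra generated by `s₁, Q, v` and symmetric polynomials -/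

noncomputable def gvec : Fin 3 → P3 := ![powerSum 1, Qp, X 2]
noncomputable def Ualg : Subalgebra ℂ P3 := (aeval gvec).range

lemma s1U : powerSum 1 ∈ Ualg := ⟨X 0, by simp [gvec]⟩
lemma QU : Qp ∈ Ualg := ⟨X 1, by simp [gvec]⟩
lemma X2U : (X 2 : P3) ∈ Ualg := ⟨X 2, by simp [gvec]⟩

lemma w1U : (X 0 + X 1 : P3) ∈ Ualg := by
  have h : (X 0 + X 1 : P3) = powerSum 1 - X 2 := by rw [ps1]; ring
  rw [h]; exact sub_mem s1U X2U

lemma piU : (X 0 * X 1 : P3) ∈ Ualg := by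
  have h : (X 0 * X 1 : P3) = Qp - powerSum 1 * X 2 + X 2 ^ 2 - X 2 ^ 2 := by
    rw [ps1, Qp]; ring
  rw [h]
  exact sub_mem (add_mem (sub_mem QU (mul_mem s1U X2U)) (pow_mem X2U 2)) (pow_mem X2U 2)

lemma wU : ∀ k : ℕ, (X 0 ^ k + X 1 ^ k : P3) ∈ Ualg := by
  have key : ∀ k : ℕ, ((X 0 ^ k + X 1 ^ k : P3) ∈ Ualg) ∧ ((X 0 ^ (k+1) + X 1 ^ (k+1) : P3) ∈ Ualg) := by
    intro k
    induction k with
    | zero =>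
      constructor
      · have h : (X 0 ^ 0 + X 1 ^ 0 : P3) = 1 + 1 := by norm_num
        rw [h]
        exact add_mem (one_mem _) (one_mem _)
      · have h : (X 0 ^ (0+1) + X 1 ^ (0+1) : P3) = X 0 + X 1 := by norm_num
        rw [h]
        exact w1U
    | succ k IH =>
      refine ⟨IH.2, ?_⟩
      have h : (X 0 ^ (k+2) + X 1 ^ (k+2) : P3)
          = (X 0 + X 1) * (X 0 ^ (k+1) + X 1 ^ (k+1)) - (X 0 * X 1) * (X 0 ^ k + X 1 ^ k) := by
        ring
      rw [show k+1+1 = k+2 from rfl, h]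
      exact sub_mem (mul_mem w1U IH.2) (mul_mem piU IH.1)
  exact fun k => (key k).1

lemma symMon (a b c : ℕ) : ((X 0 ^ a * X 1 ^ b + X 0 ^ b * X 1 ^ a) * X 2 ^ c : P3) ∈ Ualg := by
  have core : ∀ a d : ℕ, ((X 0 ^ a * X 1 ^ (a+d) + X 0 ^ (a+d) * X 1 ^ a : P3)) ∈ Ualg := by
    intro a d
    have h : (X 0 ^ a * X 1 ^ (a+d) + X 0 ^ (a+d) * X 1 ^ a : P3)
        = (X 0 * X 1) ^ a * (X 0 ^ d + X 1 ^ d) := by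
      rw [pow_add, pow_add]; ring
    rw [h]
    exact mul_mem (pow_mem piU a) (wU d)
  have main : ((X 0 ^ a * X 1 ^ b + X 0 ^ b * X 1 ^ a : P3)) ∈ Ualg := by
    rcases le_total a b with h | h
    · obtain ⟨d, rfl⟩ := Nat.exists_eq_add_of_le h
      exact core a d
    · obtain ⟨d, rfl⟩ := Nat.exists_eq_add_of_le h
      have := core b d
      rwa [add_comm (X 0 ^ b * X 1 ^ (b+d)) _] at this
  exact mul_mem main (pow_mem X2U c)

lemma monomial_expand (m : Fin 3 →₀ ℕ) (cm : ℂ) :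
    monomial m cm = C cm * (X 0 ^ m 0 * X 1 ^ m 1 * X 2 ^ m 2 : P3) := by
  rw [monomial_eq]
  congr 1
  rw [Finsupp.prod_fintype _ _ (fun i => pow_zero _)]
  exact Fin.prod_univ_three _

lemma SYM (f : P3) (hsw : rename (Equiv.swap (0 : Fin 3) 1) f = f) : f ∈ Ualg := by
  have key : ∀ (m : Fin 3 →₀ ℕ) (cm : ℂ),
      monomial m cm + monomial (m.mapDomain (Equiv.swap (0 : Fin 3) 1)) cm ∈ Ualg := by
    intro m cm
    have hmap : ∀ i : Fin 3, (m.mapDomain (Equiv.swap (0 : Fin 3) 1)) i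
        = m ((Equiv.swap (0 : Fin 3) 1) i) := by
      intro i
      rw [Finsupp.mapDomain_equiv_apply, Equiv.symm_swap]
    have e0 : (Equiv.swap (0 : Fin 3) 1) 0 = 1 := by decide
    have e1 : (Equiv.swap (0 : Fin 3) 1) 1 = 0 := by decide
    have e2 : (Equiv.swap (0 : Fin 3) 1) 2 = 2 := by decide
    have h0 : (m.mapDomain (Equiv.swap (0 : Fin 3) 1)) 0 = m 1 := by
      rw [hmap, e0]
    have h1 : (m.mapDomain (Equiv.swap (0 : Fin 3) 1)) 1 = m 0 := by
      rw [hmap, e1]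
    have h2 : (m.mapDomain (Equiv.swap (0 : Fin 3) 1)) 2 = m 2 := by
      rw [hmap, e2]
    rw [monomial_expand, monomial_expand, h0, h1, h2]
    have h : C cm * (X 0 ^ m 0 * X 1 ^ m 1 * X 2 ^ m 2 : P3)
        + C cm * (X 0 ^ m 1 * X 1 ^ m 0 * X 2 ^ m 2)
        = cm • ((X 0 ^ m 0 * X 1 ^ m 1 + X 0 ^ m 1 * X 1 ^ m 0) * X 2 ^ m 2) := by
      rw [smul_eq_C_mul]; ring
    rw [h]
    exact Subalgebra.smul_mem _ (symMon (m 0) (m 1) (m 2)) _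
  have hsum : f + rename (Equiv.swap (0 : Fin 3) 1) f ∈ Ualg := by
    rw [as_sum f, map_sum, ← Finset.sum_add_distrib]
    refine sum_mem fun m hm => ?_
    rw [rename_monomial]
    exact key m _
  have hmem := Subalgebra.smul_mem Ualg hsum (2⁻¹ : ℂ)
  have h12 : (2⁻¹ : ℂ) • (f + rename (Equiv.swap (0 : Fin 3) 1) f) = f := by
    rw [hsw, ← two_smul ℂ f, smul_smul]
    norm_num
  rwa [h12] at hmem

/-! ### Evaluation and cancellation -/

lemma evalAeval {σ τ : Type*} (g : σ → MvPolynomial τ ℂ) (x : τ → ℂ)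
    (f : MvPolynomial σ ℂ) :
    eval x (aeval g f) = eval (fun i => eval x (g i)) f := by
  induction f using MvPolynomial.induction_on with
  | C a => simp
  | add p q hp hq => simp only [map_add, hp, hq]
  | mul_X p i hp => simp only [map_mul, hp, aeval_X, eval_X]

noncomputable def Phi2 : P3 →ₐ[ℂ] P2 := aeval ![X 0, X 1, -(X 1)]
noncomputable def Psi2 : P3 →ₐ[ℂ] P2 := aeval ![X 0, 0, 0]

lemma cancel_poly (f : P3)
    (hc : ∀ t t' : ℂ, aeval (![X 0, C t, -(C t)] : Fin 3 → MvPolynomial ℕ ℂ) f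
      = aeval (![X 0, C t', -(C t')] : Fin 3 → MvPolynomial ℕ ℂ) f) :
    Phi2 f = Psi2 f := by
  apply MvPolynomial.funext
  intro x
  have hfun1 : (fun i => eval x ((![X 0, X 1, -(X 1)] : Fin 3 → P2) i)) = ![x 0, x 1, -(x 1)] := by
    funext i; fin_cases i <;> simp
  have hfun2 : (fun i => eval x ((![X 0, 0, 0] : Fin 3 → P2) i)) = ![x 0, 0, 0] := by
    funext i; fin_cases i <;> simp
  have h1 : eval x (Phi2 f) = eval ![x 0, x 1, -(x 1)] f := by
    rw [Phi2, evalAeval, hfun1]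
  have h2 : eval x (Psi2 f) = eval ![x 0, 0, 0] f := by
    rw [Psi2, evalAeval, hfun2]
  have h3 := congrArg (fun q => eval ((fun _ => x 0) : ℕ → ℂ) q) (hc (x 1) 0)
  rw [evalAeval, evalAeval] at h3
  have h4 : (fun i => eval ((fun _ => x 0) : ℕ → ℂ)
        ((![X 0, C (x 1), -(C (x 1))] : Fin 3 → MvPolynomial ℕ ℂ) i))
      = ![x 0, x 1, -(x 1)] := by
    funext i; fin_cases i <;> simp
  have h5 : (fun i => eval ((fun _ => x 0) : ℕ → ℂ)
        ((![X 0, C (0:ℂ), -(C (0:ℂ))] : Fin 3 → MvPolynomial ℕ ℂ) i))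
      = ![x 0, 0, 0] := by
    funext i; fin_cases i <;> simp
  rw [h4, h5] at h3
  rw [h1, h2, h3]

/-! ### Homomorphism compositions -/

noncomputable def gam : P3 →ₐ[ℂ] P2 := aeval ![X 0, 0, -(X 1)]
noncomputable def del : P2 →ₐ[ℂ] P3 := aeval ![X 0, -(X 2)]
noncomputable def eps1 : P3 →ₐ[ℂ] P3 := aeval ![X 0, 0, X 2]
noncomputable def eps2 : P3 →ₐ[ℂ] P3 := aeval ![X 0, X 1, 0]

lemma c1 : Phi2.comp (aeval gvec) = gam := by
  apply MvPolynomial.algHom_ext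
  intro i
  fin_cases i <;> simp [Phi2, gam, gvec, ps1, Qp] <;> ring

lemma c2 : Psi2.comp (aeval gvec) = Psi2 := by
  apply MvPolynomial.algHom_ext
  intro i
  fin_cases i <;> simp [Psi2, gvec, ps1, Qp]

lemma c4 : del.comp gam = eps1 := by
  apply MvPolynomial.algHom_ext
  intro i
  fin_cases i <;> simp [del, gam, eps1]

lemma c5 : gam.comp eps2 = Psi2 := by
  apply MvPolynomial.algHom_ext
  intro i
  fin_cases i <;> simp [gam, eps2, Psi2]

lemma c6 : (aeval gvec).comp eps2 = aeval ![powerSum 1, Qp, 0] := by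
  apply MvPolynomial.algHom_ext
  intro i
  fin_cases i <;> simp [gvec, eps2]

/-! ### Division by `X 1` -/

lemma vd (P : P3) : P - eps1 P ∈ Ideal.span {(X 1 : P3)} := by
  induction P using MvPolynomial.induction_on with
  | C a => simp [eps1]
  | add p q hp hq =>
      have h : p + q - eps1 (p + q) = (p - eps1 p) + (q - eps1 q) := by
        rw [map_add]; ring
      rw [h]
      exact Ideal.add_mem _ hp hq
  | mul_X p i hp =>
      fin_cases i
      · show p * X 0 - eps1 (p * X 0) ∈ Ideal.span {(X 1 : P3)}
        have h : p * X 0 - eps1 (p * X 0) = (p - eps1 p) * X 0 := by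
          rw [map_mul, show eps1 (X 0) = X 0 from by simp [eps1]]; ring
        rw [h]
        exact Ideal.mul_mem_right _ _ hp
      · show p * X 1 - eps1 (p * X 1) ∈ Ideal.span {(X 1 : P3)}
        have h : p * X 1 - eps1 (p * X 1) = p * X 1 := by
          rw [map_mul, show eps1 (X 1) = 0 from by simp [eps1]]; ring
        rw [h]
        exact Ideal.mul_mem_left _ _ (Ideal.subset_span rfl)
      · show p * X 2 - eps1 (p * X 2) ∈ Ideal.span {(X 1 : P3)}
        have h : p * X 2 - eps1 (p * X 2) = (p - eps1 p) * X 2 := by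
          rw [map_mul, show eps1 (X 2) = X 2 from by simp [eps1]]; ring
        rw [h]
        exact Ideal.mul_mem_right _ _ hp

/-! ### Membership lemmas -/

lemma aeval_mem_T (g : Fin 3 → P3) (hg : ∀ i, g i ∈ Talg) (P : P3) : aeval g P ∈ Talg := by
  induction P using MvPolynomial.induction_on with
  | C a => simpa using Subalgebra.algebraMap_mem Talg a
  | add p q hp hq => rw [map_add]; exact add_mem hp hq
  | mul_X p i hp => rw [map_mul, aeval_X]; exact mul_mem hp (hg i)

lemma QU' (R : P3) : ∀ c : ℕ, Qp * X 2 ^ c * aeval gvec R ∈ Talg := by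
  induction R using MvPolynomial.induction_on with
  | C a =>
      intro c
      have h : Qp * X 2 ^ c * aeval gvec (C a) = a • (Qp * X 2 ^ c) := by
        rw [aeval_C, smul_eq_C_mul]
        rw [Algebra.algebraMap_eq_smul_one, smul_eq_C_mul]
        ring
      rw [h]
      exact Subalgebra.smul_mem _ (EQmem c) _
  | add p q hp hq =>
      intro c
      rw [map_add, mul_add]
      exact add_mem (hp c) (hq c)
  | mul_X p i hp =>
      intro c
      rw [map_mul, aeval_X]
      fin_cases i
      · show Qp * X 2 ^ c * (aeval gvec p * gvec 0) ∈ Talg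
        have h : Qp * X 2 ^ c * (aeval gvec p * gvec 0)
            = (Qp * X 2 ^ c * aeval gvec p) * powerSum 1 := by
          simp only [gvec]; norm_num; ring
        rw [h]
        exact mul_mem (hp c) (hs_mem 1 le_rfl)
      · show Qp * X 2 ^ c * (aeval gvec p * gvec 1) ∈ Talg
        have h : Qp * X 2 ^ c * (aeval gvec p * gvec 1)
            = (Qp * X 2 ^ c * aeval gvec p) * Qp := by
          simp only [gvec]; norm_num; ring
        rw [h]
        exact mul_mem (hp c) hQT
      · show Qp * X 2 ^ c * (aeval gvec p * gvec 2) ∈ Talg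
        have h : Qp * X 2 ^ c * (aeval gvec p * gvec 2)
            = Qp * X 2 ^ (c+1) * aeval gvec p := by
          simp only [gvec]; norm_num; rw [pow_succ, show (![powerSum 1, Qp, X 2] : Fin 3 → P3) 2 = X 2 from rfl]; ring
        rw [h]
        exact hp (c+1)

/-! ### Main lemma: supersymmetric polynomials lie in the algebra of power sums -/

lemma main_lemma (f : P3) (hf : IsSupersymmetric f) : f ∈ Talg := by
  obtain ⟨P, hP0'⟩ := SYM f hf.1
  have hP : aeval gvec P = f := hP0'
  have hPhi : Phi2 f = Psi2 f := cancel_poly f hf.2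
  set P0 := eps2 P with hP0
  have e1 : gam P = Phi2 f := by rw [← hP, ← AlgHom.comp_apply, c1]
  have e2 : gam P0 = Psi2 P := by rw [hP0, ← AlgHom.comp_apply, c5]
  have e3 : Psi2 P = Psi2 f := by rw [← hP, ← AlgHom.comp_apply, c2]
  have hg1 : gam (P - P0) = 0 := by
    rw [map_sub, e1, e2, e3, hPhi, sub_self]
  have heps : eps1 (P - P0) = 0 := by
    rw [← c4, AlgHom.comp_apply, hg1, map_zero]
  have hspan : P - P0 ∈ Ideal.span {(X 1 : P3)} := by
    have h := vd (P - P0)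
    rwa [heps, sub_zero] at h
  obtain ⟨R, hR⟩ := Ideal.mem_span_singleton'.mp hspan
  have hdecomp : f = aeval gvec P0 + aeval gvec (P - P0) := by
    rw [← map_add, add_sub_cancel, hP]
  have h1 : aeval gvec P0 ∈ Talg := by
    rw [hP0, ← AlgHom.comp_apply, c6]
    refine aeval_mem_T _ ?_ P
    intro i
    fin_cases i
    · simpa using hs_mem 1 le_rfl
    · simpa using hQT
    · simpa using zero_mem Talg
  have h2 : aeval gvec (P - P0) ∈ Talg := by
    rw [← hR, map_mul]
    have hX1 : aeval gvec (X 1 : P3) = Qp := by simp [gvec]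
    rw [hX1]
    have h : aeval gvec R * Qp = Qp * X 2 ^ 0 * aeval gvec R := by ring
    rw [h]
    exact QU' R 0
  rw [hdecomp]
  exact add_mem h1 h2

/-! ### Supersymmetry of the power sums -/

lemma powerSum_supersymmetric (p : ℕ) : IsSupersymmetric (powerSum p) := by
  constructor
  · have e0 : (Equiv.swap (0 : Fin 3) 1) 0 = 1 := by decide
    have e1 : (Equiv.swap (0 : Fin 3) 1) 1 = 0 := by decide
    have e2 : (Equiv.swap (0 : Fin 3) 1) 2 = 2 := by decide
    simp only [powerSum, map_sub, map_add, map_mul, map_pow, rename_X, map_neg, map_one,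
      e0, e1, e2]
    ring
  · intro t t'
    have key : ∀ s : ℂ, aeval (![X 0, C s, -(C s)] : Fin 3 → MvPolynomial ℕ ℂ) (powerSum p)
        = X 0 ^ p := by
      intro s
      simp only [powerSum, map_sub, map_add, map_mul, map_pow, aeval_X, map_neg, map_one]
      have h0 : (![X 0, C s, -(C s)] : Fin 3 → MvPolynomial ℕ ℂ) 0 = X 0 := rfl
      have h1 : (![X 0, C s, -(C s)] : Fin 3 → MvPolynomial ℕ ℂ) 1 = C s := rfl
      have h2 : (![X 0, C s, -(C s)] : Fin 3 → MvPolynomial ℕ ℂ) 2 = -(C s) := rfl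
      rw [h0, h1, h2]
      have h : (-1 : MvPolynomial ℕ ℂ) ^ p * (-(C s)) ^ p = (C s) ^ p := by
        rw [← mul_pow]
        norm_num
      rw [h]
      ring
    rw [key t, key t']

/-! ### The main theorem -/

/-- Let `∂` be the derivation of `R` with `∂ u_{i,N} = u_{i,N+1}` and
`∂ v_{1,N} = v_{1,N+1}`.  The smallest `∂`-stable ℂ-subalgebra of `R`
containing all supersymmetric polynomials `Λ^{2|1}` equals the smallest
`∂`-stable ℂ-subalgebra containing the power sums `s_p`, `p ≥ 1`. -/
theorem affine_supersymmetric_generated_by_powerSums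
    (D : Derivation ℂ DiffPoly DiffPoly)
    (hD : ∀ (i : Fin 3) (N : ℕ), D (X (i, N)) = X (i, N + 1)) :
    sInf {A : Subalgebra ℂ DiffPoly |
        (∀ a ∈ A, D a ∈ A) ∧
        ∀ f : MvPolynomial (Fin 3) ℂ, IsSupersymmetric f → emb f ∈ A} =
      sInf {A : Subalgebra ℂ DiffPoly |
        (∀ a ∈ A, D a ∈ A) ∧
        ∀ p : ℕ, 1 ≤ p → emb (powerSum p) ∈ A} := by
  have hset : {A : Subalgebra ℂ DiffPoly |
        (∀ a ∈ A, D a ∈ A) ∧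
        ∀ f : MvPolynomial (Fin 3) ℂ, IsSupersymmetric f → emb f ∈ A} =
      {A : Subalgebra ℂ DiffPoly |
        (∀ a ∈ A, D a ∈ A) ∧
        ∀ p : ℕ, 1 ≤ p → emb (powerSum p) ∈ A} := by
    ext A
    simp only [Set.mem_setOf_eq]
    constructor
    · rintro ⟨hDst, hsym⟩
      exact ⟨hDst, fun p _ => hsym _ (powerSum_supersymmetric p)⟩
    · rintro ⟨hDst, hpow⟩
      refine ⟨hDst, fun f hf => ?_⟩
      have hfT : f ∈ Talg := main_lemma f hf
      have himg : emb f ∈ (Talg.map emb : Subalgebra ℂ DiffPoly) := ⟨f, hfT, rfl⟩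
      have hle : (Talg.map emb : Subalgebra ℂ DiffPoly) ≤ A := by
        rw [Talg, AlgHom.map_adjoin]
        refine Algebra.adjoin_le ?_
        rintro x ⟨g, ⟨p, hp, rfl⟩, rfl⟩
        exact hpow p hp
      exact hle himg
  rw [hset]
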